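/- Let G be the spanning subgraph of P_k^d where each vertex v is joined to all vertices v − e_j with the j-th coordinate of v small (i.e., less than r−1 and positive), together with min{L(v), m−1} downward edges in large coordinates, where L(v) is the number of coordinates of v of size at least r−1. Then the number of edges of G equals Σ_{j=0}^{d}Σ_{i=0}^{d−j}(m−1+i)C(d,j)C(d−j,i)(k−r+1)^j(r−2)^i − Σ_{j=0}^{m−2}Σ_{i=0}^{d−j}(m−1−j)C(d,j)C(d−j,i)(k−r+1)^j(r−2)^i. -/

import Mathlib

open SimpleGraph Finset

def cube (d : ℕ) : SimpleGraph (Fin d → ZMod 2) :=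
  SimpleGraph.fromRel (fun u v => ∃ i, u i ≠ v i ∧ ∀ j, j ≠ i → u j = v j)

def grid (k d : ℕ) : SimpleGraph (Fin d → Fin k) :=
  SimpleGraph.fromRel (fun u v => ∃ i, ((u i : ℕ)) + 1 = (v i : ℕ) ∧ ∀ j, j ≠ i → u j = v j)

def CopyAt {α β : Type*} (H : SimpleGraph α) (G : SimpleGraph β) (u v : β) : Prop :=
  ∃ f : α → β, Function.Injective f ∧ (∀ ⦃a b⦄, H.Adj a b → G.Adj (f a) (f b)) ∧
    ∃ a b, H.Adj a b ∧ f a = u ∧ f b = v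

def ContainsCopy {α β : Type*} (H : SimpleGraph α) (G : SimpleGraph β) : Prop :=
  ∃ f : α → β, Function.Injective f ∧ ∀ ⦃a b⦄, H.Adj a b → G.Adj (f a) (f b)

def WeaklySaturated {α β : Type*} (F G : SimpleGraph β) (H : SimpleGraph α) : Prop :=
  G ≤ F ∧ ∃ (n : ℕ) (seq : ℕ → SimpleGraph β), seq 0 = G ∧ seq n = F ∧
    ∀ i < n, ∃ u v : β, ¬ (seq i).Adj u v ∧ F.Adj u v ∧
      seq (i + 1) = seq i ⊔ SimpleGraph.fromEdgeSet {s(u, v)} ∧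
      CopyAt H (seq (i + 1)) u v

noncomputable def wsatNum {α β : Type*} (F : SimpleGraph β) (H : SimpleGraph α) : ℕ :=
  sInf {n | ∃ G, WeaklySaturated F G H ∧ G.edgeSet.ncard = n}

def Saturated {α β : Type*} (F G : SimpleGraph β) (H : SimpleGraph α) : Prop :=
  G ≤ F ∧ ¬ ContainsCopy H G ∧ ∀ u v : β, F.Adj u v → ¬ G.Adj u v →
    ContainsCopy H (G ⊔ SimpleGraph.fromEdgeSet {s(u, v)})

noncomputable def satNum {α β : Type*} (F : SimpleGraph β) (H : SimpleGraph α) : ℕ :=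
  sInf {n | ∃ G, Saturated F G H ∧ G.edgeSet.ncard = n}

/-- `u` is obtained from `v` by decreasing coordinate `j` by one. -/
def downAdj {k d : ℕ} (u v : Fin d → Fin k) (j : Fin d) : Prop :=
  (u j : ℕ) + 1 = (v j : ℕ) ∧ ∀ i, i ≠ j → u i = v i

lemma card_filter_le_fin (k a : ℕ) (ha : a < k) :
    ((univ : Finset (Fin k)).filter (fun x : Fin k => a ≤ (x : ℕ))).card = k - a := by
  have h : ((univ : Finset (Fin k)).filter (fun x : Fin k => a ≤ (x : ℕ)))
      = Finset.Ici (⟨a, ha⟩ : Fin k) := by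
    ext x; simp [Fin.le_def]
  rw [h, Fin.card_Ici]

lemma card_filter_mid_fin (k a : ℕ) (ha : a < k) (hk : 0 < k) :
    ((univ : Finset (Fin k)).filter (fun x : Fin k => 0 < (x : ℕ) ∧ (x : ℕ) < a)).card = a - 1 := by
  have h : ((univ : Finset (Fin k)).filter (fun x : Fin k => 0 < (x : ℕ) ∧ (x : ℕ) < a))
      = Finset.Ioo (⟨0, hk⟩ : Fin k) (⟨a, ha⟩ : Fin k) := by
    ext x; simp [Fin.lt_def, and_comm]
  rw [h, Fin.card_Ioo]; rfl

lemma fiber_card (k d r : ℕ) (hr : 2 ≤ r) (hk : r ≤ k) (J I : Finset (Fin d))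
    (hJI : Disjoint J I) :
    ((univ : Finset (Fin d → Fin k)).filter
      (fun v => (univ.filter (fun j => r - 1 ≤ (v j : ℕ)) = J) ∧
        (univ.filter (fun j => 0 < (v j : ℕ) ∧ (v j : ℕ) < r - 1) = I))).card
      = (k - r + 1) ^ J.card * (r - 2) ^ I.card := by
  have hk0 : 0 < k := by omega
  have hrk : r - 1 < k := by omega
  set S : Fin d → Finset (Fin k) := fun j =>
    if j ∈ J then (univ.filter (fun x : Fin k => r - 1 ≤ (x : ℕ)))
    else if j ∈ I then (univ.filter (fun x : Fin k => 0 < (x : ℕ) ∧ (x : ℕ) < r - 1))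
    else {(⟨0, hk0⟩ : Fin k)} with hS
  have hset : ((univ : Finset (Fin d → Fin k)).filter
      (fun v => (univ.filter (fun j => r - 1 ≤ (v j : ℕ)) = J) ∧
        (univ.filter (fun j => 0 < (v j : ℕ) ∧ (v j : ℕ) < r - 1) = I)))
      = Fintype.piFinset S := by
    ext v
    simp only [mem_filter, mem_univ, true_and, Fintype.mem_piFinset]
    constructor
    · rintro ⟨hJ, hI⟩ j
      by_cases hj : j ∈ J
      · have hj2 : r - 1 ≤ (v j : ℕ) := by
          rw [← hJ] at hj
          simpa using (mem_filter.mp hj).2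
        simp only [hS, if_pos hj, mem_filter, mem_univ, true_and]
        exact hj2
      · by_cases hi : j ∈ I
        · have hi2 : 0 < (v j : ℕ) ∧ (v j : ℕ) < r - 1 := by
            rw [← hI] at hi
            simpa using (mem_filter.mp hi).2
          simp only [hS, if_neg hj, if_pos hi, mem_filter, mem_univ, true_and]
          exact hi2
        · simp only [hS, if_neg hj, if_neg hi, mem_singleton]
          rw [← hJ] at hj
          rw [← hI] at hi
          simp only [mem_filter, mem_univ, true_and] at hj hi
          have : (v j : ℕ) = 0 := by omega
          exact Fin.ext this
    · intro h
      have hJ' : ∀ j, j ∈ J → r - 1 ≤ (v j : ℕ) := by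
        intro j hj
        have := h j
        simp only [hS, if_pos hj, mem_filter, mem_univ, true_and] at this
        exact this
      have hI' : ∀ j, j ∈ I → 0 < (v j : ℕ) ∧ (v j : ℕ) < r - 1 := by
        intro j hj
        have hjJ : j ∉ J := fun hc => (hJI.forall_ne_finset hc hj) rfl
        have := h j
        simp only [hS, if_neg hjJ, if_pos hj, mem_filter, mem_univ, true_and] at this
        exact this
      have hZ : ∀ j, j ∉ J → j ∉ I → (v j : ℕ) = 0 := by
        intro j hj hi
        have := h j
        simp only [hS, if_neg hj, if_neg hi, mem_singleton] at this
        rw [this]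
      constructor
      · ext j
        simp only [mem_filter, mem_univ, true_and]
        constructor
        · intro hle
          by_contra hj
          by_cases hi : j ∈ I
          · have := hI' j hi; omega
          · have := hZ j hj hi; omega
        · exact hJ' j
      · ext j
        simp only [mem_filter, mem_univ, true_and]
        constructor
        · intro hmid
          by_contra hi
          by_cases hj : j ∈ J
          · have := hJ' j hj; omega
          · have := hZ j hj hi; omega
        · exact hI' j
  rw [hset, Fintype.card_piFinset]
  have hcard : ∀ j, (S j).card =
      (if j ∈ J then (k - r + 1) else 1) * (if j ∈ I then (r - 2) else 1) := by
    intro j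
    by_cases hj : j ∈ J
    · have hi : j ∉ I := fun hc => (hJI.forall_ne_finset hj hc) rfl
      simp only [hS, if_pos hj, if_neg hi, mul_one]
      rw [card_filter_le_fin k (r - 1) hrk]; omega
    · by_cases hi : j ∈ I
      · simp only [hS, if_neg hj, if_pos hi, one_mul]
        rw [card_filter_mid_fin k (r - 1) hrk hk0]; omega
      · simp [hS, if_neg hj, if_neg hi]
  rw [Finset.prod_congr rfl (fun j _ => hcard j), Finset.prod_mul_distrib]
  congr 1
  · rw [Finset.prod_ite_mem, univ_inter, Finset.prod_const]
  · rw [Finset.prod_ite_mem, univ_inter, Finset.prod_const]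

lemma fiber_empty (k d r : ℕ) (J I : Finset (Fin d)) (hJI : ¬ Disjoint J I) :
    ((univ : Finset (Fin d → Fin k)).filter
      (fun v => (univ.filter (fun j => r - 1 ≤ (v j : ℕ)) = J) ∧
        (univ.filter (fun j => 0 < (v j : ℕ) ∧ (v j : ℕ) < r - 1) = I))).card = 0 := by
  rw [Finset.card_eq_zero, Finset.filter_eq_empty_iff]
  rintro v -
  rintro ⟨hJ, hI⟩
  obtain ⟨j, hjJ, hjI⟩ := Finset.not_disjoint_iff.mp hJI
  rw [← hJ] at hjJ
  rw [← hI] at hjI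
  simp only [mem_filter, mem_univ, true_and] at hjJ hjI
  omega

lemma count_sum (k d r : ℕ) (hr : 2 ≤ r) (hk : r ≤ k) (g : ℕ → ℕ → ℕ) :
    ∑ v : Fin d → Fin k,
        g (univ.filter (fun j => r - 1 ≤ (v j : ℕ))).card
          (univ.filter (fun j => 0 < (v j : ℕ) ∧ (v j : ℕ) < r - 1)).card
      = ∑ j ∈ range (d + 1), ∑ i ∈ range (d - j + 1),
          g j i * d.choose j * (d - j).choose i * (k - r + 1) ^ j * (r - 2) ^ i := by
  classical
  set L : (Fin d → Fin k) → Finset (Fin d) :=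
    fun v => univ.filter (fun j => r - 1 ≤ (v j : ℕ)) with hL
  set M : (Fin d → Fin k) → Finset (Fin d) :=
    fun v => univ.filter (fun j => 0 < (v j : ℕ) ∧ (v j : ℕ) < r - 1) with hM
  have step1 : ∑ v : Fin d → Fin k, g (L v).card (M v).card
      = ∑ p ∈ (univ : Finset (Fin d)).powerset ×ˢ (univ : Finset (Fin d)).powerset,
          ∑ v ∈ univ.filter (fun v => (L v, M v) = p), g (L v).card (M v).card := by
    refine (Finset.sum_fiberwise_of_maps_to ?_ _).symm
    intro v _
    simp [Finset.mem_product, Finset.mem_powerset]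
  rw [step1]
  have step2 : ∀ p ∈ (univ : Finset (Fin d)).powerset ×ˢ (univ : Finset (Fin d)).powerset,
      ∑ v ∈ univ.filter (fun v => (L v, M v) = p), g (L v).card (M v).card
      = (univ.filter (fun v => L v = p.1 ∧ M v = p.2)).card * g p.1.card p.2.card := by
    intro p _
    have : univ.filter (fun v => (L v, M v) = p) = univ.filter (fun v => L v = p.1 ∧ M v = p.2) := by
      apply Finset.filter_congr
      intro v _
      simp [Prod.ext_iff]
    rw [this]
    rw [Finset.sum_congr rfl (fun v hv => ?_), Finset.sum_const, smul_eq_mul]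
    obtain ⟨h1, h2⟩ := (Finset.mem_filter.mp hv).2
    rw [h1, h2]
  rw [Finset.sum_congr rfl step2]
  have step3 : ∀ p ∈ (univ : Finset (Fin d)).powerset ×ˢ (univ : Finset (Fin d)).powerset,
      (univ.filter (fun v => L v = p.1 ∧ M v = p.2)).card * g p.1.card p.2.card
      = (if Disjoint p.1 p.2 then
          (k - r + 1) ^ p.1.card * (r - 2) ^ p.2.card * g p.1.card p.2.card else 0) := by
    intro p _
    by_cases hdis : Disjoint p.1 p.2
    · rw [if_pos hdis, fiber_card k d r hr hk p.1 p.2 hdis]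
    · rw [if_neg hdis, fiber_empty k d r p.1 p.2 hdis, zero_mul]
  rw [Finset.sum_congr rfl step3, Finset.sum_product]
  have hpows : ∀ J : Finset (Fin d),
      ((univ : Finset (Fin d)).powerset.filter (fun I => Disjoint J I))
        = ((univ : Finset (Fin d)) \ J).powerset := by
    intro J
    ext I
    simp only [Finset.mem_filter, Finset.mem_powerset, Finset.subset_sdiff]
    constructor
    · rintro ⟨h1, h2⟩; exact ⟨h1, h2.symm⟩
    · rintro ⟨h1, h2⟩; exact ⟨h1, h2.symm⟩
  set F : ℕ → ℕ := fun j => ∑ i ∈ range (d - j + 1),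
      (d - j).choose i • ((k - r + 1) ^ j * (r - 2) ^ i * g j i) with hF
  have hcJ : ∀ J : Finset (Fin d), ((univ : Finset (Fin d)) \ J).card = d - J.card := by
    intro J
    rw [Finset.card_sdiff_of_subset (Finset.subset_univ _), Finset.card_univ, Fintype.card_fin]
  have step4 : ∀ J ∈ (univ : Finset (Fin d)).powerset,
      ∑ I ∈ (univ : Finset (Fin d)).powerset,
        (if Disjoint J I then (k - r + 1) ^ J.card * (r - 2) ^ I.card * g J.card I.card else 0)
      = F J.card := by
    intro J _
    rw [← Finset.sum_filter, hpows J]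
    have h1 := Finset.sum_powerset_apply_card
      (f := fun i => (k - r + 1) ^ J.card * (r - 2) ^ i * g J.card i)
      (x := (univ : Finset (Fin d)) \ J)
    rw [hcJ J] at h1
    exact h1
  rw [Finset.sum_congr rfl step4]
  have h2 := Finset.sum_powerset_apply_card (f := F) (x := (univ : Finset (Fin d)))
  rw [Finset.card_univ, Fintype.card_fin] at h2
  rw [h2, hF]
  refine Finset.sum_congr rfl fun j hj => ?_
  rw [smul_eq_mul, Finset.mul_sum]
  refine Finset.sum_congr rfl fun i hi => ?_
  rw [smul_eq_mul]
  ring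

lemma edge_count (k d r m : ℕ) (hr : 2 ≤ r)
    (D : (Fin d → Fin k) → Finset (Fin d))
    (hD1 : ∀ v, ∀ j ∈ D v, r - 1 ≤ (v j : ℕ))
    (hD2 : ∀ v, (D v).card =
      min (Finset.univ.filter (fun j => r - 1 ≤ (v j : ℕ))).card (m - 1))
    (G : SimpleGraph (Fin d → Fin k))
    (hG : ∀ u v, G.Adj u v ↔
      (∃ j, downAdj u v j ∧ ((v j : ℕ) < r - 1 ∨ j ∈ D v)) ∨
      (∃ j, downAdj v u j ∧ ((u j : ℕ) < r - 1 ∨ j ∈ D u))) :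
    G.edgeSet.ncard = ∑ v : Fin d → Fin k,
      ((univ.filter (fun j => 0 < (v j : ℕ) ∧ (v j : ℕ) < r - 1)).card
        + min (univ.filter (fun j => r - 1 ≤ (v j : ℕ))).card (m - 1)) := by
  classical
  have hfin : G.edgeSet.Finite := Set.toFinite _
  rw [Set.ncard_eq_toFinset_card _ hfin]
  set Q : (Fin d → Fin k) → Fin d → Prop :=
    fun v j => 0 < (v j : ℕ) ∧ ((v j : ℕ) < r - 1 ∨ j ∈ D v) with hQ
  set T : Finset (Σ _ : Fin d → Fin k, Fin d) :=
    (univ : Finset (Fin d → Fin k)).sigma (fun v => univ.filter (Q v)) with hT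
  set down : (Σ _ : Fin d → Fin k, Fin d) → (Fin d → Fin k) := fun p =>
    Function.update p.1 p.2
      (⟨(p.1 p.2 : ℕ) - 1, Nat.lt_of_le_of_lt (Nat.sub_le _ _) (p.1 p.2).isLt⟩ : Fin k)
    with hdowndef
  have hdown : ∀ (v : Fin d → Fin k) (j : Fin d), 0 < (v j : ℕ) →
      downAdj (down ⟨v, j⟩) v j := by
    intro v j hpos
    constructor
    · show ((Function.update v j _ : Fin d → Fin k) j : ℕ) + 1 = (v j : ℕ)
      rw [Function.update_self]
      simp only []
      omega
    · intro i hi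
      exact Function.update_of_ne hi _ _
  have key : T.card = hfin.toFinset.card := by
    apply Finset.card_bij (fun p _ => s(down p, p.1))
    · rintro ⟨v, j⟩ hp
      rw [Set.Finite.mem_toFinset]
      rw [Finset.mem_sigma, Finset.mem_filter] at hp
      obtain ⟨-, -, hpos, hcond⟩ := hp
      exact (hG _ _).mpr (Or.inl ⟨j, hdown v j hpos, hcond⟩)
    · rintro ⟨v₁, j₁⟩ h₁ ⟨v₂, j₂⟩ h₂ heq
      rw [Finset.mem_sigma, Finset.mem_filter] at h₁ h₂
      obtain ⟨-, -, hpos₁, -⟩ := h₁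
      obtain ⟨-, -, hpos₂, -⟩ := h₂
      have hd₁ := hdown v₁ j₁ hpos₁
      have hd₂ := hdown v₂ j₂ hpos₂
      rw [Sym2.eq_iff] at heq
      rcases heq with ⟨hu, hv⟩ | ⟨hu, hv⟩
      · have hvv : v₁ = v₂ := hv
        subst hvv
        have hjj : j₁ = j₂ := by
          by_contra hne
          have e1 : down ⟨v₁, j₁⟩ j₂ = v₁ j₂ := hd₁.2 j₂ (Ne.symm hne)
          have e2 : (down ⟨v₁, j₂⟩ j₂ : ℕ) + 1 = (v₁ j₂ : ℕ) := hd₂.1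
          rw [hu] at e1
          rw [e1] at e2
          omega
        subst hjj
        rfl
      · exfalso
        have e1 : (down ⟨v₁, j₁⟩ j₁ : ℕ) + 1 = (v₁ j₁ : ℕ) := hd₁.1
        have e2 : (down ⟨v₂, j₂⟩ j₂ : ℕ) + 1 = (v₂ j₂ : ℕ) := hd₂.1
        by_cases hjj : j₁ = j₂
        · subst hjj
          have c1 : (down ⟨v₁, j₁⟩ j₁ : ℕ) = (v₂ j₁ : ℕ) := by rw [hu]
          have c2 : (down ⟨v₂, j₁⟩ j₁ : ℕ) = (v₁ j₁ : ℕ) := by rw [← hv]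
          omega
        · have e3 : down ⟨v₁, j₁⟩ j₂ = v₁ j₂ := hd₁.2 j₂ (Ne.symm hjj)
          have c1 : (down ⟨v₁, j₁⟩ j₂ : ℕ) = (v₂ j₂ : ℕ) := by rw [hu]
          have c2 : (down ⟨v₂, j₂⟩ j₂ : ℕ) = (v₁ j₂ : ℕ) := by rw [← hv]
          have c3 : (v₁ j₂ : ℕ) = (v₂ j₂ : ℕ) := by rw [← e3, hu]
          omega
    · intro b hb
      rw [Set.Finite.mem_toFinset] at hb
      induction b using Sym2.ind with
      | _ u v =>
        rw [SimpleGraph.mem_edgeSet] at hb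
        rcases (hG u v).mp hb with ⟨j, hda, hcond⟩ | ⟨j, hda, hcond⟩
        · have hpos : 0 < (v j : ℕ) := by have := hda.1; omega
          refine ⟨⟨v, j⟩, ?_, ?_⟩
          · rw [Finset.mem_sigma, Finset.mem_filter]
            exact ⟨mem_univ _, mem_univ _, hpos, hcond⟩
          · have hdu : down ⟨v, j⟩ = u := by
              funext x
              by_cases hx : x = j
              · subst hx
                have h1 := (hdown v x hpos).1
                have h2 := hda.1
                exact Fin.ext (by omega)
              · rw [(hdown v j hpos).2 x hx, (hda.2 x hx)]
            rw [hdu]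
        · have hpos : 0 < (u j : ℕ) := by have := hda.1; omega
          refine ⟨⟨u, j⟩, ?_, ?_⟩
          · rw [Finset.mem_sigma, Finset.mem_filter]
            exact ⟨mem_univ _, mem_univ _, hpos, hcond⟩
          · have hdu : down ⟨u, j⟩ = v := by
              funext x
              by_cases hx : x = j
              · subst hx
                have h1 := (hdown u x hpos).1
                have h2 := hda.1
                exact Fin.ext (by omega)
              · rw [(hdown u j hpos).2 x hx, (hda.2 x hx)]
            rw [hdu, Sym2.eq_swap]
  rw [← key, hT, Finset.card_sigma]
  refine Finset.sum_congr rfl fun v _ => ?_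
  have hunion : univ.filter (Q v)
      = (univ.filter (fun j => 0 < (v j : ℕ) ∧ (v j : ℕ) < r - 1)) ∪ D v := by
    ext j
    simp only [hQ, Finset.mem_filter, Finset.mem_union, Finset.mem_univ, true_and]
    constructor
    · rintro ⟨hp, hlt | hD⟩
      · exact Or.inl ⟨hp, hlt⟩
      · exact Or.inr hD
    · rintro (⟨hp, hlt⟩ | hD)
      · exact ⟨hp, Or.inl hlt⟩
      · have := hD1 v j hD
        exact ⟨by omega, Or.inr hD⟩
  have hdisj : Disjoint (univ.filter (fun j => 0 < (v j : ℕ) ∧ (v j : ℕ) < r - 1)) (D v) := by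
    rw [Finset.disjoint_left]
    intro j hj hD
    have h1 := (Finset.mem_filter.mp hj).2
    have h2 := hD1 v j hD
    omega
  rw [hunion, Finset.card_union_of_disjoint hdisj, hD2 v]

theorem stmt_19 (k d r m : ℕ) (hr : 2 ≤ r) (hk : r ≤ k) (hm : 1 ≤ m) (hd : m ≤ d)
    (D : (Fin d → Fin k) → Finset (Fin d))
    (hD1 : ∀ v, ∀ j ∈ D v, r - 1 ≤ (v j : ℕ))
    (hD2 : ∀ v, (D v).card =
      min (Finset.univ.filter (fun j => r - 1 ≤ (v j : ℕ))).card (m - 1))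
    (G : SimpleGraph (Fin d → Fin k))
    (hG : ∀ u v, G.Adj u v ↔
      (∃ j, downAdj u v j ∧ ((v j : ℕ) < r - 1 ∨ j ∈ D v)) ∨
      (∃ j, downAdj v u j ∧ ((u j : ℕ) < r - 1 ∨ j ∈ D u))) :
    G.edgeSet.ncard =
      (∑ j ∈ Finset.range (d + 1), ∑ i ∈ Finset.range (d - j + 1),
        (m - 1 + i) * d.choose j * (d - j).choose i * (k - r + 1) ^ j * (r - 2) ^ i)
      - (∑ j ∈ Finset.range (m - 1), ∑ i ∈ Finset.range (d - j + 1),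
        (m - 1 - j) * d.choose j * (d - j).choose i * (k - r + 1) ^ j * (r - 2) ^ i) := by
  classical
  have h1 := edge_count k d r m hr D hD1 hD2 G hG
  have h2 := count_sum k d r hr hk (fun j i => i + min j (m - 1))
  rw [h1]
  refine h2.trans ?_
  clear h1 h2 hG hD2 hD1 G D
  have hterm : ∀ (x y c1 c2 c3 c4 : ℕ),
      x * c1 * c2 * c3 * c4 - y * c1 * c2 * c3 * c4 = (x - y) * c1 * c2 * c3 * c4 := by
    intro x y c1 c2 c3 c4
    simp only [mul_assoc]
    rw [Nat.sub_mul]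
  have hsum : ∀ j ∈ Finset.range (d + 1),
      ∑ i ∈ Finset.range (d - j + 1),
        ((fun j i => i + min j (m - 1)) j i) * d.choose j * (d - j).choose i
          * (k - r + 1) ^ j * (r - 2) ^ i
      = (∑ i ∈ Finset.range (d - j + 1),
          (m - 1 + i) * d.choose j * (d - j).choose i * (k - r + 1) ^ j * (r - 2) ^ i)
        - (∑ i ∈ Finset.range (d - j + 1),
          (m - 1 - j) * d.choose j * (d - j).choose i * (k - r + 1) ^ j * (r - 2) ^ i) := by
    intro j _
    have hle : ∀ i ∈ Finset.range (d - j + 1),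
        (m - 1 - j) * d.choose j * (d - j).choose i * (k - r + 1) ^ j * (r - 2) ^ i
          ≤ (m - 1 + i) * d.choose j * (d - j).choose i * (k - r + 1) ^ j * (r - 2) ^ i := by
      intro i _
      gcongr <;> omega
    rw [← Finset.sum_tsub_distrib _ hle]
    refine Finset.sum_congr rfl fun i _ => ?_
    rw [hterm]
    congr 4
    show i + min j (m - 1) = m - 1 + i - (m - 1 - j)
    omega
  have hle2 : ∀ j ∈ Finset.range (d + 1),
      (∑ i ∈ Finset.range (d - j + 1),
        (m - 1 - j) * d.choose j * (d - j).choose i * (k - r + 1) ^ j * (r - 2) ^ i)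
      ≤ (∑ i ∈ Finset.range (d - j + 1),
        (m - 1 + i) * d.choose j * (d - j).choose i * (k - r + 1) ^ j * (r - 2) ^ i) := by
    intro j _
    refine Finset.sum_le_sum fun i _ => ?_
    gcongr <;> omega
  rw [Finset.sum_congr rfl hsum, Finset.sum_tsub_distrib _ hle2]
  congr 1
  refine (Finset.sum_subset (Finset.range_subset_range.mpr (by omega)) fun j _ hj => ?_).symm
  rw [Finset.mem_range, not_lt] at hj
  refine Finset.sum_eq_zero fun i _ => ?_
  rw [Nat.sub_eq_zero_of_le hj]
  ring
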